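/- If an n×n block-partitioned real matrix A is robustly block D-stable and α ⊆ {1,…,N} is a nonempty index set, then the block principal submatrix A_{α,α}, formed from the blocks A_{i,j} with i,j ∈ α, is robustly block D-stable with respect to the induced block partition (n_i)_{i∈α}. -/

import Mathlib

open Matrix

/-- A square real matrix is Hurwitz if every eigenvalue of it, viewed as a complex
matrix, has strictly negative real part. -/
def IsHurwitz {m : Type*} [Fintype m] [DecidableEq m] (M : Matrix m m ℝ) : Prop :=
  ∀ μ ∈ spectrum ℂ (M.map (algebraMap ℝ ℂ)), μ.re < 0

/-- The operator 2-norm of a square real matrix. -/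
noncomputable def opNorm2 {m : Type*} [Fintype m] [DecidableEq m] (M : Matrix m m ℝ) : ℝ :=
  ‖Matrix.toEuclideanCLM (𝕜 := ℝ) M‖

/-- A block-partitioned square real matrix (blocks indexed by `ι`, the `i`-th block of
size `n i`) is block D-stable if `D * A` is Hurwitz for every positive block-diagonal
scaling `D = blkdiag (d 1 • I, …, d N • I)`. -/
def BlockDStable {ι : Type*} [Fintype ι] [DecidableEq ι] {n : ι → ℕ}
    (A : Matrix ((i : ι) × Fin (n i)) ((i : ι) × Fin (n i)) ℝ) : Prop :=
  ∀ d : ι → ℝ, (∀ i, 0 < d i) →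
    IsHurwitz (Matrix.diagonal (fun p => d p.1) * A)

/-- A block-partitioned square real matrix is robustly block D-stable if all
sufficiently small (in operator 2-norm) perturbations of it are block D-stable. -/
def RobustBlockDStable {ι : Type*} [Fintype ι] [DecidableEq ι] {n : ι → ℕ}
    (A : Matrix ((i : ι) × Fin (n i)) ((i : ι) × Fin (n i)) ℝ) : Prop :=
  ∃ μ > 0, ∀ B : Matrix ((i : ι) × Fin (n i)) ((i : ι) × Fin (n i)) ℝ,
    opNorm2 B ≤ μ → BlockDStable (A + B)

section Helpers


open Polynomial

lemma coord_le_norm {m : Type*} [Fintype m] (x : EuclideanSpace ℝ m) (p : m) : |x p| ≤ ‖x‖ := by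
  rw [EuclideanSpace.norm_eq, ← Real.sqrt_sq_eq_abs]
  apply Real.sqrt_le_sqrt
  have := Finset.single_le_sum (f := fun i => ‖x i‖ ^ 2) (fun i _ => by positivity)
    (Finset.mem_univ p)
  simpa [Real.norm_eq_abs, sq_abs] using this

lemma entry_abs_le_opNorm2 {m : Type*} [Fintype m] [DecidableEq m] (M : Matrix m m ℝ) (p q : m) :
    |M p q| ≤ opNorm2 M := by
  have h := (Matrix.toEuclideanCLM (𝕜 := ℝ) M).le_opNorm (EuclideanSpace.single q (1:ℝ))
  rw [EuclideanSpace.norm_single, norm_one, mul_one] at h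
  refine le_trans ?_ (le_trans (coord_le_norm _ p) h)
  have h1 : (Matrix.toEuclideanCLM (𝕜 := ℝ) M (EuclideanSpace.single q 1)) p
      = (M *ᵥ (fun r => EuclideanSpace.single q (1:ℝ) r)) p := rfl
  rw [h1]
  have h2 : (fun r => EuclideanSpace.single q (1:ℝ) r) = Pi.single q 1 := by
    ext r; simp [EuclideanSpace.single_apply, Pi.single_apply, eq_comm]
  rw [h2, mulVec_single]
  simp

lemma opNorm2_stdBasisMatrix {m : Type*} [Fintype m] [DecidableEq m] (p q : m) (c : ℝ) :
    opNorm2 (Matrix.single p q c) ≤ |c| := by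
  apply ContinuousLinearMap.opNorm_le_bound _ (abs_nonneg c)
  intro x
  have hx : ∀ r, (Matrix.toEuclideanCLM (𝕜 := ℝ) (Matrix.single p q c) x) r
      = ((Matrix.single p q c) *ᵥ (fun s => x s)) r := fun _ => rfl
  have hmv : (Matrix.single p q c) *ᵥ (fun s => x s) = Function.update (0 : m → ℝ) p (c * x q) :=
    Matrix.single_mulVec p q c _
  rw [EuclideanSpace.norm_eq]
  have hb : ∀ r, ‖(Matrix.toEuclideanCLM (𝕜 := ℝ) (Matrix.single p q c) x) r‖ ^ 2
      = if r = p then (c * x q) ^ 2 else 0 := by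
    intro r
    rw [hx, hmv]
    by_cases h : r = p <;>
      simp [h, Function.update_apply, Real.norm_eq_abs, sq_abs, abs_mul, mul_pow]
  calc Real.sqrt (∑ r, ‖(Matrix.toEuclideanCLM (𝕜 := ℝ) (Matrix.single p q c) x) r‖ ^ 2)
      = Real.sqrt ((c * x q) ^ 2) := by
        congr 1
        rw [Finset.sum_congr rfl (fun r _ => hb r), Finset.sum_ite_eq' Finset.univ p
          (fun _ => (c * x q) ^ 2)]
        simp
    _ = |c * x q| := Real.sqrt_sq_eq_abs _
    _ ≤ |c| * ‖x‖ := by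
        rw [abs_mul]
        exact mul_le_mul_of_nonneg_left (coord_le_norm x q) (abs_nonneg c)

lemma opNorm2_le_sum_abs {m : Type*} [Fintype m] [DecidableEq m] (M : Matrix m m ℝ) :
    opNorm2 M ≤ ∑ p : m, ∑ q : m, |M p q| := by
  conv_lhs => rw [show M = ∑ p : m, ∑ q : m, Matrix.single p q (M p q) from
    matrix_eq_sum_single M]
  unfold opNorm2
  rw [map_sum]
  refine le_trans (norm_sum_le _ _) (Finset.sum_le_sum fun p _ => ?_)
  rw [map_sum]
  exact le_trans (norm_sum_le _ _) (Finset.sum_le_sum fun q _ => opNorm2_stdBasisMatrix p q _)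

lemma eval_charpoly_eq {m : Type*} [Fintype m] [DecidableEq m] (M : Matrix m m ℂ) (z : ℂ) :
    M.charpoly.eval z = (z • (1 : Matrix m m ℂ) - M).det := by
  rw [Matrix.charpoly, ← Polynomial.coe_evalRingHom, RingHom.map_det]
  congr 1
  ext i j
  by_cases h : i = j <;>
    simp [h, Matrix.charmatrix_apply, Matrix.diagonal_apply, Matrix.one_apply,
      Matrix.smul_apply, Matrix.sub_apply, Matrix.map_apply]

lemma mem_spectrum_iff_root {m : Type*} [Fintype m] [DecidableEq m] (M : Matrix m m ℂ) (z : ℂ) :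
    z ∈ spectrum ℂ M ↔ M.charpoly.eval z = 0 := by
  rw [spectrum.mem_iff, Algebra.algebraMap_eq_smul_one, eval_charpoly_eq,
    Matrix.isUnit_iff_isUnit_det, isUnit_iff_ne_zero, not_not]

lemma hurwitz_det_lb {m : Type*} [Fintype m] [DecidableEq m] (M : Matrix m m ℂ)
    (h : ∀ w ∈ spectrum ℂ M, w.re < 0) {δ : ℝ} (hδ : 0 < δ) {z : ℂ} (hz : δ ≤ z.re) :
    δ ^ (Fintype.card m) ≤ ‖(z • (1 : Matrix m m ℂ) - M).det‖ := by
  have hm := M.charpoly_monic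
  have hsp : M.charpoly.Splits := IsAlgClosed.splits M.charpoly
  have hcard : M.charpoly.roots.card = Fintype.card m := by
    rw [(Polynomial.splits_iff_card_roots).mp hsp, Matrix.charpoly_natDegree_eq_dim]
  have heval : M.charpoly.eval z = (M.charpoly.roots.map fun a => z - a).prod := by
    conv_lhs => rw [hsp.eq_prod_roots_of_monic hm]
    rw [Polynomial.eval_multiset_prod, Multiset.map_map]
    simp
  rw [← eval_charpoly_eq, heval]
  set δ' : NNReal := ⟨δ, hδ.le⟩ with hδ'
  have key : δ' ^ (Fintype.card m) ≤ ‖(M.charpoly.roots.map fun a => z - a).prod‖₊ := by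
    have hprod : ‖(M.charpoly.roots.map fun a => z - a).prod‖₊ =
        ((M.charpoly.roots.map fun a => z - a).map (fun w : ℂ => ‖w‖₊)).prod := by
      simpa using map_multiset_prod (nnnormHom : ℂ →*₀ NNReal)
        (M.charpoly.roots.map fun a => z - a)
    rw [hprod, ← hcard,
      show Multiset.card M.charpoly.roots =
        Multiset.card (((M.charpoly.roots.map fun a => z - a)).map (fun w : ℂ => ‖w‖₊)) by
          rw [Multiset.card_map, Multiset.card_map]]
    apply Multiset.pow_card_le_prod
    intro x hx
    rw [Multiset.mem_map] at hx
    obtain ⟨y, hy, rfl⟩ := hx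
    rw [Multiset.mem_map] at hy
    obtain ⟨a, ha, rfl⟩ := hy
    have haspec : a ∈ spectrum ℂ M := by
      rw [mem_spectrum_iff_root]
      exact (Polynomial.mem_roots'.mp ha).2
    have hre : a.re < 0 := h a haspec
    have hle : δ ≤ ‖z - a‖ := by
      refine le_trans ?_ (Complex.re_le_norm (z - a))
      rw [Complex.sub_re]
      linarith
    rw [← NNReal.coe_le_coe]
    exact hle
  calc δ ^ Fintype.card m = ((δ' ^ Fintype.card m : NNReal) : ℝ) := by rw [NNReal.coe_pow]; rfl
    _ ≤ ((‖(M.charpoly.roots.map fun a => z - a).prod‖₊ : NNReal) : ℝ) := NNReal.coe_le_coe.mpr key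
    _ = _ := rfl

end Helpers

theorem robust_block_D_stable_submatrix
    (N : ℕ) (hN : 0 < N) (n : Fin N → ℕ) (hn : ∀ i, 0 < n i)
    (A : Matrix ((i : Fin N) × Fin (n i)) ((i : Fin N) × Fin (n i)) ℝ)
    (hA : RobustBlockDStable A)
    (α : Finset (Fin N)) (hα : α.Nonempty) :
    RobustBlockDStable
      (fun (p q : (i : {x : Fin N // x ∈ α}) × Fin (n i.1)) =>
        A ⟨p.1.1, p.2⟩ ⟨q.1.1, q.2⟩) := by
  classical
  obtain ⟨μ, hμ, hrob⟩ := hA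
  set K : ℝ := (Fintype.card ((i : Fin N) × Fin (n i)) : ℝ) with hK_def
  have hK : 0 ≤ K := Nat.cast_nonneg _
  set ν : ℝ := μ / (2 * (K ^ 2 + 1)) with hν_def
  have hν : 0 < ν := by positivity
  refine ⟨ν, hν, ?_⟩
  intro B hB
  show BlockDStable (Matrix.of (fun (p q : (i : {x : Fin N // x ∈ α}) × Fin (n i.1)) =>
    A ⟨p.1.1, p.2⟩ ⟨q.1.1, q.2⟩) + B)
  set Asub : Matrix ((i : {x : Fin N // x ∈ α}) × Fin (n i.1))
      ((i : {x : Fin N // x ∈ α}) × Fin (n i.1)) ℝ :=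
    Matrix.of (fun (p q : (i : {x : Fin N // x ∈ α}) × Fin (n i.1)) =>
      A ⟨p.1.1, p.2⟩ ⟨q.1.1, q.2⟩) with hAsub_def
  intro d hd
  by_contra hcon
  unfold IsHurwitz at hcon
  push_neg at hcon
  obtain ⟨z, hz, hzre⟩ := hcon
  haveI hne : Nonempty {x : Fin N // x ∈ α} := ⟨⟨hα.choose, hα.choose_spec⟩⟩
  set dmin : ℝ := Finset.univ.inf' Finset.univ_nonempty (fun i : {x : Fin N // x ∈ α} => d i)
    with hdmin_def
  have hdmin : 0 < dmin := by
    rw [hdmin_def, Finset.lt_inf'_iff]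
    exact fun i _ => hd i
  have hdmin_le : ∀ i : {x : Fin N // x ∈ α}, dmin ≤ d i :=
    fun i => Finset.inf'_le _ (Finset.mem_univ i)
  set δ : ℝ := ν * dmin with hδ_def
  have hδ : 0 < δ := mul_pos hν hdmin
  set B' : Matrix ((i : {x : Fin N // x ∈ α}) × Fin (n i.1))
      ((i : {x : Fin N // x ∈ α}) × Fin (n i.1)) ℝ :=
    B + Matrix.diagonal (fun p => δ * (d p.1)⁻¹) with hB'_def
  have hdinv : ∀ i : {x : Fin N // x ∈ α}, δ * (d i)⁻¹ ≤ ν := by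
    intro i
    rw [hδ_def, mul_assoc]
    calc ν * (dmin * (d i)⁻¹) ≤ ν * 1 := by
          apply mul_le_mul_of_nonneg_left _ hν.le
          rw [← div_eq_mul_inv, div_le_one (hd i)]
          exact hdmin_le i
      _ = ν := mul_one ν
  have hkey : Matrix.diagonal (fun p : (i : {x : Fin N // x ∈ α}) × Fin (n i.1) => d p.1) *
        (Asub + B')
      = Matrix.diagonal (fun p => d p.1) * (Asub + B) + δ • 1 := by
    rw [hB'_def, ← add_assoc, mul_add, Matrix.diagonal_mul_diagonal]
    congr 1
    have h1 : (fun p : (i : {x : Fin N // x ∈ α}) × Fin (n i.1) => d p.1 * (δ * (d p.1)⁻¹))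
        = fun _ => δ := by
      funext p; field_simp; exact div_self (hd p.1).ne'
    rw [h1, Matrix.smul_one_eq_diagonal]
  have hdet0 : (z • (1 : Matrix ((i : {x : Fin N // x ∈ α}) × Fin (n i.1))
        ((i : {x : Fin N // x ∈ α}) × Fin (n i.1)) ℂ) -
      (Matrix.diagonal (fun p : (i : {x : Fin N // x ∈ α}) × Fin (n i.1) => d p.1) *
        (Asub + B)).map (algebraMap ℝ ℂ)).det = 0 := by
    have h := (mem_spectrum_iff_root _ z).mp hz
    rwa [eval_charpoly_eq] at h
  obtain ⟨v, hv0, hv⟩ := (Matrix.exists_mulVec_eq_zero_iff).mpr hdet0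
  have hvE : ((Matrix.diagonal (fun p : (i : {x : Fin N // x ∈ α}) × Fin (n i.1) => d p.1) *
      (Asub + B)).map (algebraMap ℝ ℂ)) *ᵥ v
      = z • v := by
    rw [Matrix.sub_mulVec, sub_eq_zero, Matrix.smul_mulVec, Matrix.one_mulVec] at hv
    exact hv.symm
  have hv' : ((Matrix.diagonal (fun p : (i : {x : Fin N // x ∈ α}) × Fin (n i.1) => d p.1) *
      (Asub + B')).map (algebraMap ℝ ℂ)) *ᵥ v
      = (z + δ) • v := by
    rw [hkey, Matrix.map_add _ (by simp),
      show (((δ • (1 : Matrix ((i : {x : Fin N // x ∈ α}) × Fin (n i.1))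
          ((i : {x : Fin N // x ∈ α}) × Fin (n i.1)) ℝ))).map (algebraMap ℝ ℂ))
          = (δ : ℂ) • 1 by
        ext i j; by_cases h : i = j <;> simp [h, Matrix.map_apply, Matrix.one_apply],
      Matrix.add_mulVec, hvE, Matrix.smul_mulVec, Matrix.one_mulVec, ← add_smul]
  set Bhat : Matrix ((i : Fin N) × Fin (n i)) ((i : Fin N) × Fin (n i)) ℝ :=
    Matrix.of (fun p q => if h : p.1 ∈ α ∧ q.1 ∈ α
      then B' ⟨⟨p.1, h.1⟩, p.2⟩ ⟨⟨q.1, h.2⟩, q.2⟩ else 0) with hBhat_def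
  have hentry : ∀ p q, |Bhat p q| ≤ 2 * ν := by
    intro p q
    rw [hBhat_def]
    by_cases h : p.1 ∈ α ∧ q.1 ∈ α
    · simp only [Matrix.of_apply, dif_pos h]
      rw [hB'_def]
      refine le_trans (abs_add_le _ _) ?_
      have h1 : |B ⟨⟨p.1, h.1⟩, p.2⟩ ⟨⟨q.1, h.2⟩, q.2⟩| ≤ ν :=
        le_trans (entry_abs_le_opNorm2 B _ _) hB
      have h2 : |Matrix.diagonal
          (fun r : (i : {x : Fin N // x ∈ α}) × Fin (n i.1) => δ * (d r.1)⁻¹)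
          ⟨⟨p.1, h.1⟩, p.2⟩ ⟨⟨q.1, h.2⟩, q.2⟩| ≤ ν := by
        rw [Matrix.diagonal_apply]
        split
        · rw [abs_of_nonneg (mul_nonneg hδ.le (inv_nonneg.mpr (hd _).le))]
          exact hdinv _
        · simpa using hν.le
      linarith
    · simp only [Matrix.of_apply, dif_neg h, abs_zero]
      positivity
  have hBhat_norm : opNorm2 Bhat ≤ μ := by
    have hsum : opNorm2 Bhat ≤ ∑ p : (i : Fin N) × Fin (n i), ∑ q : (i : Fin N) × Fin (n i),
        |Bhat p q| := opNorm2_le_sum_abs Bhat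
    have hsum2 : ∑ p : (i : Fin N) × Fin (n i), ∑ q : (i : Fin N) × Fin (n i), |Bhat p q|
        ≤ K * (K * (2 * ν)) := by
      calc ∑ p : (i : Fin N) × Fin (n i), ∑ q : (i : Fin N) × Fin (n i), |Bhat p q|
          ≤ ∑ _p : (i : Fin N) × Fin (n i), ∑ _q : (i : Fin N) × Fin (n i), 2 * ν :=
            Finset.sum_le_sum fun p _ => Finset.sum_le_sum fun q _ => hentry p q
        _ = K * (K * (2 * ν)) := by
            simp only [Finset.sum_const, Finset.card_univ, nsmul_eq_mul, hK_def]
    have hν2 : ν * (2 * (K ^ 2 + 1)) = μ := by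
      rw [hν_def]
      field_simp
    nlinarith [hν.le, hsum, hsum2, hν2]
  have hBlock : BlockDStable (A + Bhat) := hrob Bhat hBhat_norm
  set dfull : ℝ → Fin N → ℝ := fun ε i => if h : i ∈ α then d ⟨i, h⟩ else ε with hdfull_def
  have hdfull_pos : ∀ ε : ℝ, 0 < ε → ∀ i, 0 < dfull ε i := by
    intro ε hε i
    simp only [hdfull_def]
    split
    · exact hd _
    · exact hε
  have hc_dfull : ∀ i : Fin N, Continuous fun ε : ℝ => dfull ε i := by
    intro i
    by_cases h : i ∈ α
    · simpa only [hdfull_def, dif_pos h] using continuous_const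
    · simpa only [hdfull_def, dif_neg h] using continuous_id'
  have hge : ∀ ε : ℝ, 0 < ε → δ ^ Fintype.card ((i : Fin N) × Fin (n i)) ≤
      ‖((z + (δ : ℂ)) • (1 : Matrix ((i : Fin N) × Fin (n i)) ((i : Fin N) × Fin (n i)) ℂ) -
        (Matrix.diagonal (fun p : (i : Fin N) × Fin (n i) => dfull ε p.1) *
          (A + Bhat)).map (algebraMap ℝ ℂ)).det‖ := by
    intro ε hε
    refine hurwitz_det_lb _ (hBlock (dfull ε) (hdfull_pos ε hε)) hδ ?_
    simp only [Complex.add_re, Complex.ofReal_re]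
    linarith
  have hcont : Continuous (fun ε : ℝ =>
      ‖((z + (δ : ℂ)) • (1 : Matrix ((i : Fin N) × Fin (n i)) ((i : Fin N) × Fin (n i)) ℂ) -
        (Matrix.diagonal (fun p : (i : Fin N) × Fin (n i) => dfull ε p.1) *
          (A + Bhat)).map (algebraMap ℝ ℂ)).det‖) := by
    apply Continuous.norm
    apply Continuous.matrix_det
    apply continuous_matrix
    intro p q
    simp only [Matrix.sub_apply, Matrix.smul_apply, Matrix.map_apply, Matrix.diagonal_mul,
      Complex.coe_algebraMap]
    apply Continuous.sub continuous_const
    exact Complex.continuous_ofReal.comp ((hc_dfull p.1).mul continuous_const)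
  have hlb : δ ^ Fintype.card ((i : Fin N) × Fin (n i)) ≤
      ‖((z + (δ : ℂ)) • (1 : Matrix ((i : Fin N) × Fin (n i)) ((i : Fin N) × Fin (n i)) ℂ) -
        (Matrix.diagonal (fun p : (i : Fin N) × Fin (n i) => dfull 0 p.1) *
          (A + Bhat)).map (algebraMap ℝ ℂ)).det‖ := by
    have htd := (hcont.tendsto 0).mono_left (nhdsWithin_le_nhds (s := Set.Ioi (0:ℝ)))
    refine ge_of_tendsto htd ?_
    filter_upwards [self_mem_nhdsWithin] with ε hε
    exact hge ε hε
  -- now construct the kernel vector showing the determinant at 0 vanishes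
  set vhat : ((i : Fin N) × Fin (n i)) → ℂ :=
    fun p => if h : p.1 ∈ α then v ⟨⟨p.1, h⟩, p.2⟩ else 0 with hvhat_def
  have hvhat0 : vhat ≠ 0 := by
    obtain ⟨q', hq'⟩ := Function.ne_iff.mp hv0
    obtain ⟨⟨i, hi⟩, j⟩ := q'
    intro hcontra
    apply hq'
    have h1 := congrFun hcontra ⟨i, j⟩
    simpa [hvhat_def, hi] using h1
  have hsumr : ∀ F : ((i : Fin N) × Fin (n i)) → ℂ, (∀ q, q.1 ∉ α → F q = 0) →
      ∑ q, F q = ∑ q' : (i : {x : Fin N // x ∈ α}) × Fin (n i.1), F ⟨q'.1.1, q'.2⟩ := by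
    intro F hF
    have hinj : ∀ x ∈ (Finset.univ : Finset ((i : {x : Fin N // x ∈ α}) × Fin (n i.1))),
        ∀ y ∈ Finset.univ,
        (fun q' : (i : {x : Fin N // x ∈ α}) × Fin (n i.1) =>
          (⟨q'.1.1, q'.2⟩ : (i : Fin N) × Fin (n i))) x
          = (fun q' : (i : {x : Fin N // x ∈ α}) × Fin (n i.1) =>
          (⟨q'.1.1, q'.2⟩ : (i : Fin N) × Fin (n i))) y → x = y := by
      have hinj' : Function.Injective
          (fun q' : (i : {x : Fin N // x ∈ α}) × Fin (n i.1) =>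
            (⟨q'.1.1, q'.2⟩ : (i : Fin N) × Fin (n i))) := by
        exact Function.Injective.sigma_map (β₂ := fun i : Fin N => Fin (n i))
          (f₁ := (Subtype.val : {x : Fin N // x ∈ α} → Fin N))
          (f₂ := fun a : {x : Fin N // x ∈ α} => (id : Fin (n a.1) → Fin (n a.1)))
          Subtype.val_injective (fun a => Function.injective_id)
      exact fun x _ y _ hxy => hinj' hxy
    rw [← Finset.sum_image hinj]
    apply (Finset.sum_subset (Finset.subset_univ _) _).symm
    intro q _ hq
    apply hF
    intro hqα
    apply hq
    rw [Finset.mem_image]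
    exact ⟨⟨⟨q.1, hqα⟩, q.2⟩, Finset.mem_univ _, rfl⟩
  have hker : ((Matrix.diagonal (fun p : (i : Fin N) × Fin (n i) => dfull 0 p.1) *
        (A + Bhat)).map (algebraMap ℝ ℂ)) *ᵥ vhat = (z + (δ : ℂ)) • vhat := by
    funext p
    obtain ⟨i, j⟩ := p
    show ∑ q, ((Matrix.diagonal (fun p : (i : Fin N) × Fin (n i) => dfull 0 p.1) *
        (A + Bhat)).map (algebraMap ℝ ℂ)) ⟨i, j⟩ q * vhat q = (z + (δ : ℂ)) * vhat ⟨i, j⟩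
    by_cases hi : i ∈ α
    · have hvan : ∀ q : (i : Fin N) × Fin (n i), q.1 ∉ α →
          ((Matrix.diagonal (fun p : (i : Fin N) × Fin (n i) => dfull 0 p.1) *
            (A + Bhat)).map (algebraMap ℝ ℂ)) ⟨i, j⟩ q * vhat q = 0 := by
        intro q hq
        rw [hvhat_def]
        simp [hq]
      rw [hsumr _ hvan]
      have hvs := congrFun hv' ⟨⟨i, hi⟩, j⟩
      have hlhs : ((Matrix.diagonal
            (fun p : (i : {x : Fin N // x ∈ α}) × Fin (n i.1) => d p.1) *
          (Asub + B')).map (algebraMap ℝ ℂ) *ᵥ v) ⟨⟨i, hi⟩, j⟩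
          = ∑ q' : (i : {x : Fin N // x ∈ α}) × Fin (n i.1),
            ((Matrix.diagonal (fun p : (i : {x : Fin N // x ∈ α}) × Fin (n i.1) => d p.1) *
              (Asub + B')).map (algebraMap ℝ ℂ)) ⟨⟨i, hi⟩, j⟩ q' * v q' := rfl
      rw [hlhs] at hvs
      have hterm : ∀ q' : (i : {x : Fin N // x ∈ α}) × Fin (n i.1),
          ((Matrix.diagonal (fun p : (i : Fin N) × Fin (n i) => dfull 0 p.1) *
            (A + Bhat)).map (algebraMap ℝ ℂ)) ⟨i, j⟩ (⟨q'.1.1, q'.2⟩ : (i : Fin N) × Fin (n i))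
              * vhat ⟨q'.1.1, q'.2⟩
          = ((Matrix.diagonal (fun p : (i : {x : Fin N // x ∈ α}) × Fin (n i.1) => d p.1) *
              (Asub + B')).map (algebraMap ℝ ℂ)) ⟨⟨i, hi⟩, j⟩ q' * v q' := by
        intro q'
        obtain ⟨⟨iq, hq⟩, jq⟩ := q'
        simp [Matrix.map_apply, Matrix.diagonal_mul, Matrix.add_apply, hvhat_def, hBhat_def,
          hdfull_def, hi, hq, hAsub_def, Matrix.of_apply]
      rw [Finset.sum_congr rfl (fun q' _ => hterm q'), hvs]
      simp [hvhat_def, hi]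
    · rw [Finset.sum_eq_zero, eq_comm]
      · simp [hvhat_def, hi]
      · intro q _
        simp [Matrix.map_apply, Matrix.diagonal_mul, hdfull_def, hi]
  have hdetz : (((z + (δ : ℂ)) •
      (1 : Matrix ((i : Fin N) × Fin (n i)) ((i : Fin N) × Fin (n i)) ℂ) -
      (Matrix.diagonal (fun p : (i : Fin N) × Fin (n i) => dfull 0 p.1) *
        (A + Bhat)).map (algebraMap ℝ ℂ))).det = 0 := by
    rw [← Matrix.exists_mulVec_eq_zero_iff]
    refine ⟨vhat, hvhat0, ?_⟩
    rw [Matrix.sub_mulVec, hker, Matrix.smul_mulVec, Matrix.one_mulVec, sub_self]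
  rw [hdetz, norm_zero] at hlb
  exact absurd hlb (not_le.mpr (pow_pos hδ _))
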